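/- For every n ≥ 1, (I - T̃)^{2n} = 2ⁿ (-T̃)ⁿ ∘ diag((I-T)ⁿ, (I-T)ⁿ) as operators on K₁ ⊕ K₁. -/

import Mathlib

open ContinuousLinearMap

theorem stmt10 {K₁ : Type*}
    [NormedAddCommGroup K₁] [InnerProductSpace ℂ K₁] [FiniteDimensional ℂ K₁]
    (T : K₁ →L[ℂ] K₁)
    (Ttil : K₁ × K₁ →L[ℂ] K₁ × K₁)
    (hTtil : ∀ f g : K₁, Ttil (f, g) = (-g, f + (2:ℂ) • T g))
    (n : ℕ) (hn : 1 ≤ n) :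
    (1 - Ttil) ^ (2 * n)
      = (2:ℂ) ^ n • (((-Ttil) ^ n) ∘L ((1 - T) ^ n).prodMap ((1 - T) ^ n)) := by
  set D : K₁ × K₁ →L[ℂ] K₁ × K₁ := (1 - T).prodMap (1 - T) with hD
  have hDapp : ∀ f g : K₁, D (f, g) = ((1 - T) f, (1 - T) g) := fun f g => rfl
  have hsq : (1 - Ttil) ^ 2 = (2:ℂ) • ((-Ttil) * D) := by
    apply ContinuousLinearMap.ext
    rintro ⟨f, g⟩
    have h1 : (1 - Ttil) (f, g) = (f + g, g - (f + (2:ℂ) • T g)) := by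
      simp [sub_apply, hTtil, Prod.ext_iff]
    simp only [pow_two, mul_apply_eq_comp, h1, sub_apply, one_apply, hTtil, hDapp,
      smul_apply, neg_apply, map_sub, map_add, map_smul, Prod.ext_iff,
      Prod.smul_mk, Prod.neg_mk, Prod.mk_sub_mk]
    constructor
    · simp; module
    · simp; module
  have hcomm : Commute (-Ttil) D := by
    apply ContinuousLinearMap.ext
    rintro ⟨f, g⟩
    simp only [mul_apply_eq_comp, hDapp, neg_apply, sub_apply, one_apply_eq_self,
      hTtil, map_sub, map_add, map_smul, map_neg, Prod.ext_iff, Prod.neg_mk]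
  have hDpow : ∀ m : ℕ, D ^ m = ((1 - T) ^ m).prodMap ((1 - T) ^ m) := by
    intro m
    induction m with
    | zero =>
      apply ContinuousLinearMap.ext; rintro ⟨f, g⟩
      simp [coe_prodMap']
    | succ k ih =>
      apply ContinuousLinearMap.ext; rintro ⟨f, g⟩
      simp [pow_succ, mul_apply, ih, coe_prodMap', hDapp, map_sub, sub_apply, one_apply, Prod.map]
  calc (1 - Ttil) ^ (2 * n) = ((1 - Ttil) ^ 2) ^ n := by rw [pow_mul]
    _ = ((2:ℂ) • ((-Ttil) * D)) ^ n := by rw [hsq]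
    _ = (2:ℂ) ^ n • ((-Ttil) * D) ^ n := smul_pow _ _ _
    _ = (2:ℂ) ^ n • ((-Ttil) ^ n * D ^ n) := by rw [hcomm.mul_pow]
    _ = (2:ℂ) ^ n • (((-Ttil) ^ n) ∘L ((1 - T) ^ n).prodMap ((1 - T) ^ n)) := by
        rw [hDpow]; rfl
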